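/- Suppose c ≥ 0, 0 < ρ < 1, z ≥ 0 is a constant, and y : [0,b) → ℝ is nonnegative, locally integrable, and satisfies y(t) ≤ z + c·∫₀^t (t−τ)^{ρ−1}·y(τ) dτ for all t ∈ [0,b). Then y(t) ≤ z·E_{ρ,1}(c·Γ(ρ)·t^ρ) for all t ∈ [0,b), where E_{ρ,1} is the Mittag-Leffler function. -/

import Mathlib

open Real MeasureTheory intervalIntegral
open scoped ENNReal
lemma Gamma_lb {x ρ : ℝ} (hx : 1 < x) (hρ : 0 < ρ) (hρ1 : ρ < 1) :
    Real.Gamma x * (x + ρ - 1) ^ ρ ≤ Real.Gamma (x + ρ) := by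
  have hx0 : (0:ℝ) < x := lt_trans one_pos hx
  have h1 : (0:ℝ) < x + ρ - 1 := by linarith
  have h2 : (0:ℝ) < x + ρ := by linarith
  have hcx : ConvexOn ℝ (Set.Ioi 0) (Real.log ∘ Real.Gamma) := Real.convexOn_log_Gamma
  have key := hcx.2 (Set.mem_Ioi.2 h2) (Set.mem_Ioi.2 h1)
      (by linarith : (0:ℝ) ≤ 1 - ρ) hρ.le (by ring)
  have harg : (1 - ρ) • (x + ρ) + ρ • (x + ρ - 1) = x := by simp [smul_eq_mul]; ring
  rw [harg] at key
  have hrec : Real.Gamma (x + ρ) = (x + ρ - 1) * Real.Gamma (x + ρ - 1) := by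
    have := Real.Gamma_add_one (s := x + ρ - 1) (by positivity)
    rw [show x + ρ - 1 + 1 = x + ρ by ring] at this
    exact this
  have hG1 : (0:ℝ) < Real.Gamma (x + ρ - 1) := Real.Gamma_pos_of_pos h1
  have hG2 : (0:ℝ) < Real.Gamma (x + ρ) := Real.Gamma_pos_of_pos h2
  have hGx : (0:ℝ) < Real.Gamma x := Real.Gamma_pos_of_pos hx0
  have hlog : Real.log (Real.Gamma (x + ρ - 1)) =
      Real.log (Real.Gamma (x + ρ)) - Real.log (x + ρ - 1) := by
    rw [hrec, Real.log_mul (ne_of_gt h1) (ne_of_gt hG1)]; ring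
  simp only [Function.comp, smul_eq_mul] at key
  rw [hlog] at key
  have key2 : Real.log (Real.Gamma x) + ρ * Real.log (x + ρ - 1) ≤
      Real.log (Real.Gamma (x + ρ)) := by nlinarith [key]
  have h3 := Real.exp_le_exp.2 key2
  rwa [Real.exp_add, Real.exp_log hGx, Real.exp_log hG2, mul_comm ρ _,
    ← Real.rpow_def_of_pos h1] at h3

lemma summable_aux {q ρ s : ℝ} (hq : 0 ≤ q) (hρ : 0 < ρ) (hρ1 : ρ < 1) (hs : 0 < s) :
    Summable (fun k : ℕ => q ^ k / Real.Gamma (k * ρ + s)) := by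
  apply summable_of_ratio_norm_eventually_le (r := 1/2) (by norm_num)
  have htend : Filter.Tendsto (fun k : ℕ => ((k:ℝ) * ρ + s + ρ - 1)) Filter.atTop Filter.atTop := by
    exact (Filter.tendsto_atTop_add_const_right _ (s + ρ - 1)
      (tendsto_natCast_atTop_atTop.atTop_mul_const hρ)).congr (fun k => by ring)
  have hev1 : ∀ᶠ k : ℕ in Filter.atTop, (2*q) ^ (1/ρ) ≤ (k:ℝ) * ρ + s + ρ - 1 :=
    htend.eventually_ge_atTop _
  have hev2 : ∀ᶠ k : ℕ in Filter.atTop, (1:ℝ) ≤ (k:ℝ) * ρ + s + ρ - 1 :=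
    htend.eventually_ge_atTop 1
  filter_upwards [hev1, hev2] with k hk1 hk2
  have hk3 : (1:ℝ) < (k:ℝ) * ρ + s := by linarith
  have hx1 : (0:ℝ) < (k:ℝ)*ρ + s + ρ - 1 := by linarith
  have hGlb := Gamma_lb hk3 hρ hρ1
  have hGpos : (0:ℝ) < Real.Gamma ((k:ℝ)*ρ + s) := Real.Gamma_pos_of_pos (by linarith)
  have hGpos2 : (0:ℝ) < Real.Gamma ((k:ℝ)*ρ + s + ρ) := Real.Gamma_pos_of_pos (by linarith)
  have hbd : 2*q ≤ ((k:ℝ)*ρ + s + ρ - 1) ^ ρ := by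
    rcases le_or_gt (2*q) 1 with h | h
    · exact h.trans (Real.one_le_rpow hk2 hρ.le)
    · have h0 : (0:ℝ) ≤ 2*q := by linarith
      have h4 := Real.rpow_le_rpow (Real.rpow_nonneg h0 _) hk1 hρ.le
      rwa [← Real.rpow_mul h0, one_div, inv_mul_cancel₀ hρ.ne', Real.rpow_one] at h4
  have hcast : ((k:ℕ)+1 : ℕ) * ρ + s = (k:ℝ)*ρ + s + ρ := by push_cast; ring
  rw [hcast, Real.norm_eq_abs, Real.norm_eq_abs,
    abs_of_nonneg (by positivity), abs_of_nonneg (by positivity),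
    div_le_iff₀ hGpos2, pow_succ]
  have hmul : (1/2) * (q^k / Real.Gamma ((k:ℝ)*ρ+s)) * Real.Gamma ((k:ℝ)*ρ+s+ρ)
      ≥ (1/2) * (q^k / Real.Gamma ((k:ℝ)*ρ+s)) * (Real.Gamma ((k:ℝ)*ρ+s) * ((k:ℝ)*ρ+s+ρ-1)^ρ) := by
    apply mul_le_mul_of_nonneg_left hGlb (by positivity)
  have h5 : (1/2) * (q^k / Real.Gamma ((k:ℝ)*ρ+s)) * (Real.Gamma ((k:ℝ)*ρ+s) * ((k:ℝ)*ρ+s+ρ-1)^ρ)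
      = (1/2) * q^k * ((k:ℝ)*ρ+s+ρ-1)^ρ := by
    field_simp
  have h6 : q^k * q ≤ (1/2) * q^k * ((k:ℝ)*ρ+s+ρ-1)^ρ := by
    nlinarith [pow_nonneg hq k]
  linarith [hmul, h5 ▸ hmul]

lemma real_beta {a b : ℝ} (ha : 0 < a) (hb : 0 < b) :
    ∫ x in (0:ℝ)..1, x ^ (a-1) * (1-x) ^ (b-1)
      = Real.Gamma a * Real.Gamma b / Real.Gamma (a+b) := by
  have hab : (0:ℝ) < a + b := by linarith
  have hC := Complex.Gamma_mul_Gamma_eq_betaIntegral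
      (s := (a:ℂ)) (t := (b:ℂ)) (by simpa using ha) (by simpa using hb)
  have hbeta : Complex.betaIntegral (a:ℂ) (b:ℂ)
      = ((∫ x in (0:ℝ)..1, x ^ (a-1) * (1-x) ^ (b-1) : ℝ) : ℂ) := by
    rw [Complex.betaIntegral, ← intervalIntegral.integral_ofReal]
    apply intervalIntegral.integral_congr
    intro x hx
    rw [Set.uIcc_of_le (by norm_num : (0:ℝ) ≤ 1)] at hx
    push_cast
    rw [Complex.ofReal_cpow hx.1 (a-1), Complex.ofReal_cpow (by linarith [hx.2]) (b-1)]
    push_cast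
    ring
  rw [hbeta, Complex.Gamma_ofReal, Complex.Gamma_ofReal, show ((a:ℂ)+(b:ℂ)) = ((a+b : ℝ):ℂ) by push_cast; ring, Complex.Gamma_ofReal] at hC
  have hGab : Real.Gamma (a+b) ≠ 0 := ne_of_gt (Real.Gamma_pos_of_pos hab)
  have : ((Real.Gamma a * Real.Gamma b : ℝ) : ℂ)
      = ((Real.Gamma (a+b) * ∫ x in (0:ℝ)..1, x ^ (a-1) * (1-x) ^ (b-1) : ℝ) : ℂ) := by
    push_cast
    convert hC using 2
  have h2 := Complex.ofReal_inj.1 this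
  field_simp
  linarith [h2]

/-- integrability of the Beta-type integrand on (0, u) -/
lemma beta_integrable {a b u : ℝ} (ha : 0 < a) (hb : 0 < b) (hu : 0 < u) :
    IntervalIntegrable (fun τ => (u - τ) ^ (a-1) * τ ^ (b-1)) volume 0 u := by
  have h1 : IntervalIntegrable (fun τ : ℝ => τ ^ (b-1)) volume 0 (u/2) :=
    intervalIntegral.intervalIntegrable_rpow' (by linarith)
  have h2 : IntervalIntegrable (fun τ : ℝ => (u - τ) ^ (a-1)) volume (u/2) u := by
    have h0 : IntervalIntegrable (fun τ : ℝ => τ ^ (a-1)) volume 0 (u/2) :=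
      intervalIntegral.intervalIntegrable_rpow' (by linarith)
    have h3 := (h0.comp_sub_left u).symm
    simpa [sub_half] using h3
  apply IntervalIntegrable.trans (b := u/2)
  · -- on [0, u/2]: τ^(b-1) integrable, (u-τ)^(a-1) continuous
    apply IntervalIntegrable.continuousOn_mul h1
    apply ContinuousOn.rpow_const
    · exact (continuous_const.sub continuous_id).continuousOn
    · intro x hx
      rw [Set.uIcc_of_le (by positivity : (0:ℝ) ≤ u/2)] at hx
      left
      intro hc
      have : x = u := by linarith [sub_eq_zero.1 hc]
      linarith [hx.2]
  · -- on [u/2, u]: (u-τ)^(a-1) integrable, τ^(b-1) continuous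
    apply IntervalIntegrable.mul_continuousOn h2
    apply ContinuousOn.rpow_const continuous_id.continuousOn
    intro x hx
    rw [Set.uIcc_of_le (by linarith : u/2 ≤ u)] at hx
    left
    intro hc
    simp only [id] at hc
    rw [hc] at hx
    linarith [hx.1]

lemma beta_scaled {a b u : ℝ} (ha : 0 < a) (hb : 0 < b) (hu : 0 < u) :
    ∫ τ in (0:ℝ)..u, (u - τ) ^ (a-1) * τ ^ (b-1)
      = Real.Gamma a * Real.Gamma b / Real.Gamma (a+b) * u ^ (a+b-1) := by
  have hcomp := intervalIntegral.integral_comp_mul_left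
    (f := fun τ => (u - τ) ^ (a-1) * τ ^ (b-1)) (a := (0:ℝ)) (b := 1) (c := u) hu.ne'
  simp only [mul_zero, mul_one] at hcomp
  have heq : ∫ x in (0:ℝ)..1, (u - u * x) ^ (a-1) * (u * x) ^ (b-1)
      = u ^ (a-1) * u ^ (b-1) * ∫ x in (0:ℝ)..1, x ^ (b-1) * (1-x) ^ (a-1) := by
    rw [← intervalIntegral.integral_const_mul]
    apply intervalIntegral.integral_congr
    intro x hx
    rw [Set.uIcc_of_le (by norm_num : (0:ℝ) ≤ 1)] at hx
    dsimp only
    have h1 : u - u * x = u * (1 - x) := by ring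
    rw [h1, Real.mul_rpow hu.le (by linarith [hx.2]), Real.mul_rpow hu.le hx.1]
    ring
  rw [heq, real_beta hb ha, smul_eq_mul] at hcomp
  have h2 := (inv_mul_eq_iff_eq_mul₀ hu.ne').1 hcomp.symm
  rw [h2]
  have hpow : u * (u ^ (a-1) * u ^ (b-1)) = u ^ (a+b-1) := by
    rw [← Real.rpow_add hu]
    nth_rewrite 1 [← Real.rpow_one u]
    rw [← Real.rpow_add hu]
    ring_nf
  calc u * (u ^ (a-1) * u ^ (b-1) * (Real.Gamma b * Real.Gamma a / Real.Gamma (b+a)))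
      = (u * (u ^ (a-1) * u ^ (b-1))) * (Real.Gamma b * Real.Gamma a / Real.Gamma (b+a)) := by
        ring
    _ = Real.Gamma a * Real.Gamma b / Real.Gamma (a+b) * u ^ (a+b-1) := by
        rw [hpow, add_comm b a]; ring

lemma kernel_lint {a b σ t : ℝ} (ha : 0 < a) (hb : 0 < b) (hσt : σ < t) :
    ∫⁻ τ in Set.Ioc σ t, ENNReal.ofReal ((t-τ)^(a-1)) * ENNReal.ofReal ((τ-σ)^(b-1))
      = ENNReal.ofReal (Real.Gamma a * Real.Gamma b / Real.Gamma (a+b) * (t-σ)^(a+b-1)) := by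
  have hu : (0:ℝ) < t - σ := by linarith
  set f : ℝ → ℝ := fun x => (t - σ - x) ^ (a-1) * x ^ (b-1) with hf
  have hint0 : IntervalIntegrable f volume 0 (t-σ) := beta_integrable ha hb hu
  have hint : IntervalIntegrable (fun τ => (t-τ)^(a-1) * (τ-σ)^(b-1)) volume σ t := by
    have := hint0.comp_sub_right σ
    simp only [zero_add] at this
    rw [show t - σ + σ = t by ring] at this
    apply this.congr
    intro x _
    simp only [f]
    rw [show t - σ - (x - σ) = t - x by ring]
  have hval : ∫ τ in σ..t, (t-τ)^(a-1) * (τ-σ)^(b-1)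
      = Real.Gamma a * Real.Gamma b / Real.Gamma (a+b) * (t-σ)^(a+b-1) := by
    have hsub := intervalIntegral.integral_comp_sub_right (a := σ) (b := t) f σ
    simp only [sub_self] at hsub
    have : ∫ x in σ..t, f (x - σ) = ∫ τ in σ..t, (t-τ)^(a-1) * (τ-σ)^(b-1) := by
      apply intervalIntegral.integral_congr
      intro x _
      simp only [f]
      rw [show t - σ - (x - σ) = t - x by ring]
    rw [← this, hsub, beta_scaled ha hb hu]
  have hnn : ∀ τ ∈ Set.Ioc σ t, (0:ℝ) ≤ (t-τ)^(a-1) * (τ-σ)^(b-1) := by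
    intro τ hτ
    have h1 := hτ.1; have h2 := hτ.2
    have : (0:ℝ) ≤ t - τ := by linarith
    have : (0:ℝ) ≤ τ - σ := by linarith
    positivity
  calc ∫⁻ τ in Set.Ioc σ t, ENNReal.ofReal ((t-τ)^(a-1)) * ENNReal.ofReal ((τ-σ)^(b-1))
      = ∫⁻ τ in Set.Ioc σ t, ENNReal.ofReal ((t-τ)^(a-1) * (τ-σ)^(b-1)) := by
        apply setLIntegral_congr_fun measurableSet_Ioc
        intro τ hτ
        dsimp only
        rw [ENNReal.ofReal_mul (Real.rpow_nonneg (by linarith [hτ.2]) _)]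
    _ = ENNReal.ofReal (∫ τ in Set.Ioc σ t, (t-τ)^(a-1) * (τ-σ)^(b-1)) := by
        rw [ofReal_integral_eq_lintegral_ofReal hint.1]
        filter_upwards [ae_restrict_mem measurableSet_Ioc] with τ hτ
        exact hnn τ hτ
    _ = ENNReal.ofReal (Real.Gamma a * Real.Gamma b / Real.Gamma (a+b) * (t-σ)^(a+b-1)) := by
        rw [← intervalIntegral.integral_of_le hσt.le, hval]

lemma swap_lemma (g : ℝ → ℝ) (hgm : Measurable g) {a b t : ℝ}
    (ha : 0 < a) (hb : 0 < b) (ht : 0 < t) :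
    ∫⁻ τ in Set.Ioc 0 t, ENNReal.ofReal ((t-τ)^(a-1)) *
        ∫⁻ σ in Set.Ioc 0 τ, ENNReal.ofReal ((τ-σ)^(b-1)) * ENNReal.ofReal (g σ)
      = ENNReal.ofReal (Real.Gamma a * Real.Gamma b / Real.Gamma (a+b)) *
        ∫⁻ σ in Set.Ioc 0 t, ENNReal.ofReal ((t-σ)^(a+b-1)) * ENNReal.ofReal (g σ) := by
  set φ : ℝ × ℝ → ℝ≥0∞ := fun p =>
    ENNReal.ofReal ((t - p.1)^(a-1)) * (ENNReal.ofReal ((p.1 - p.2)^(b-1)) * ENNReal.ofReal (g p.2))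
    with hφ
  have hφm : Measurable φ := by
    rw [hφ]
    apply Measurable.fun_mul
    · measurability
    · apply Measurable.fun_mul
      · measurability
      · exact (hgm.comp measurable_snd).ennreal_ofReal
  set S : Set (ℝ × ℝ) := {p : ℝ × ℝ | 0 < p.2 ∧ p.2 ≤ p.1} with hS
  have hSm : MeasurableSet S :=
    (measurableSet_lt measurable_const measurable_snd).inter
      (measurableSet_le measurable_snd measurable_fst)
  set F : ℝ → ℝ → ℝ≥0∞ := fun τ σ => S.indicator φ (τ, σ) with hF
  have hFm : Measurable (Function.uncurry F) := by
    have : Function.uncurry F = S.indicator φ := by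
      ext p; simp [F, Function.uncurry]
    rw [this]; exact hφm.indicator hSm
  -- step 1 : LHS = iterated integral of F
  have step1 : ∫⁻ τ in Set.Ioc 0 t, ENNReal.ofReal ((t-τ)^(a-1)) *
        ∫⁻ σ in Set.Ioc 0 τ, ENNReal.ofReal ((τ-σ)^(b-1)) * ENNReal.ofReal (g σ)
      = ∫⁻ τ in Set.Ioc 0 t, ∫⁻ σ, F τ σ := by
    apply lintegral_congr
    intro τ
    have h1 : ∀ σ, F τ σ = (Set.Ioc 0 τ).indicator
        (fun σ => ENNReal.ofReal ((t-τ)^(a-1)) *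
          (ENNReal.ofReal ((τ-σ)^(b-1)) * ENNReal.ofReal (g σ))) σ := by
      intro σ
      by_cases h : σ ∈ Set.Ioc 0 τ
      · rw [Set.indicator_of_mem h]
        have : (τ, σ) ∈ S := ⟨h.1, h.2⟩
        simp [F, φ, Set.indicator_of_mem this]
      · rw [Set.indicator_of_notMem h]
        have : (τ, σ) ∉ S := fun hc => h ⟨hc.1, hc.2⟩
        simp [F, Set.indicator_of_notMem this]
    rw [funext h1, lintegral_indicator measurableSet_Ioc,
      lintegral_const_mul' _ _ ENNReal.ofReal_ne_top]
  -- step 2 : swap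
  have step2 : ∫⁻ τ in Set.Ioc 0 t, ∫⁻ σ, F τ σ = ∫⁻ σ, ∫⁻ τ in Set.Ioc 0 t, F τ σ :=
    lintegral_lintegral_swap (hFm.aemeasurable)
  -- step 3 : outer integral localizes to Ioc 0 t
  have hvan : ∀ σ, σ ∉ Set.Ioc 0 t → ∫⁻ τ in Set.Ioc 0 t, F τ σ = 0 := by
    intro σ hσ
    rw [Set.mem_Ioc, not_and_or] at hσ
    have : ∀ᵐ τ ∂(volume.restrict (Set.Ioc 0 t)), F τ σ = 0 := by
      filter_upwards [ae_restrict_mem measurableSet_Ioc] with τ hτ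
      rcases hσ with h | h
      · push_neg at h
        have : (τ, σ) ∉ S := fun hc => absurd hc.1 (by simpa using h)
        simp [F, Set.indicator_of_notMem this]
      · push_neg at h
        have : (τ, σ) ∉ S := fun hc => absurd hc.2 (by linarith [hτ.2])
        simp [F, Set.indicator_of_notMem this]
    calc ∫⁻ τ in Set.Ioc 0 t, F τ σ = ∫⁻ _ in Set.Ioc 0 t, (0:ℝ≥0∞) := lintegral_congr_ae this
      _ = 0 := lintegral_zero
  have step3 : ∫⁻ σ, ∫⁻ τ in Set.Ioc 0 t, F τ σ
      = ∫⁻ σ in Set.Ioc 0 t, ∫⁻ τ in Set.Ioc 0 t, F τ σ := by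
    calc ∫⁻ σ, ∫⁻ τ in Set.Ioc 0 t, F τ σ
        = ∫⁻ σ, (Set.Ioc 0 t).indicator (fun σ => ∫⁻ τ in Set.Ioc 0 t, F τ σ) σ := by
          apply lintegral_congr
          intro σ
          by_cases h : σ ∈ Set.Ioc 0 t
          · rw [Set.indicator_of_mem h]
          · rw [Set.indicator_of_notMem h, hvan σ h]
      _ = ∫⁻ σ in Set.Ioc 0 t, ∫⁻ τ in Set.Ioc 0 t, F τ σ :=
          lintegral_indicator measurableSet_Ioc _
  -- step 4 : compute inner integral for σ ∈ Ioo 0 t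
  have step4 : ∫⁻ σ in Set.Ioc 0 t, ∫⁻ τ in Set.Ioc 0 t, F τ σ
      = ∫⁻ σ in Set.Ioc 0 t,
          ENNReal.ofReal (Real.Gamma a * Real.Gamma b / Real.Gamma (a+b)) *
            (ENNReal.ofReal ((t-σ)^(a+b-1)) * ENNReal.ofReal (g σ)) := by
    rw [← setLIntegral_congr (Ioo_ae_eq_Ioc (a := (0:ℝ)) (b := t)),
        ← setLIntegral_congr (Ioo_ae_eq_Ioc (a := (0:ℝ)) (b := t)) (f := fun σ =>
          ENNReal.ofReal (Real.Gamma a * Real.Gamma b / Real.Gamma (a+b)) *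
            (ENNReal.ofReal ((t-σ)^(a+b-1)) * ENNReal.ofReal (g σ)))]
    apply setLIntegral_congr_fun measurableSet_Ioo
    intro σ hσ
    dsimp only
    -- F τ σ = (Ici σ).indicator (...) τ
    have h1 : ∀ τ, F τ σ = (Set.Ici σ).indicator (fun τ => φ (τ, σ)) τ := by
      intro τ
      by_cases h : σ ≤ τ
      · rw [Set.indicator_of_mem (Set.mem_Ici.mpr h)]
        have : (τ, σ) ∈ S := ⟨hσ.1, h⟩
        simp [F, Set.indicator_of_mem this]
      · rw [Set.indicator_of_notMem (by simpa [Set.mem_Ici] using h)]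
        have : (τ, σ) ∉ S := fun hc => h hc.2
        simp [F, Set.indicator_of_notMem this]
    rw [funext h1, lintegral_indicator measurableSet_Ici,
        Measure.restrict_restrict measurableSet_Ici]
    have hset : Set.Ici σ ∩ Set.Ioc 0 t = Set.Icc σ t := by
      ext τ
      simp only [Set.mem_inter_iff, Set.mem_Ici, Set.mem_Ioc, Set.mem_Icc]
      constructor
      · rintro ⟨h1, _, h3⟩; exact ⟨h1, h3⟩
      · rintro ⟨h1, h2⟩; exact ⟨h1, lt_of_lt_of_le hσ.1 h1, h2⟩
    rw [hset, setLIntegral_congr (Ioc_ae_eq_Icc (a := σ) (b := t)).symm]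
    have : ∫⁻ τ in Set.Ioc σ t, φ (τ, σ)
        = (∫⁻ τ in Set.Ioc σ t, ENNReal.ofReal ((t-τ)^(a-1)) * ENNReal.ofReal ((τ-σ)^(b-1)))
            * ENNReal.ofReal (g σ) := by
      rw [← lintegral_mul_const' _ _ ENNReal.ofReal_ne_top]
      apply lintegral_congr
      intro τ
      simp only [φ]; ring
    rw [this, kernel_lint ha hb hσ.2,
        ENNReal.ofReal_mul (by positivity : (0:ℝ) ≤ Real.Gamma a * Real.Gamma b / Real.Gamma (a+b))]
    ring
  rw [step1, step2, step3, step4, lintegral_const_mul' _ _ ENNReal.ofReal_ne_top]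

noncomputable def auxJ (g : ℝ → ℝ) (β s : ℝ) : ℝ≥0∞ :=
  ∫⁻ σ in Set.Ioc 0 s, ENNReal.ofReal ((s-σ)^(β-1)) * ENNReal.ofReal (g σ)

noncomputable def auxS (c ρ : ℝ) (n : ℕ) (s : ℝ) : ℝ :=
  ∑ k ∈ Finset.range n, (c * Real.Gamma ρ * s ^ ρ) ^ k / Real.Gamma ((k:ℝ) * ρ + 1)

noncomputable def auxC (c ρ : ℝ) (n : ℕ) : ℝ :=
  c ^ n * (Real.Gamma ρ) ^ n / Real.Gamma ((n:ℝ) * ρ)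

lemma power_lint {a p s : ℝ} (ha : 0 < a) (hp : 0 < p) (hs : 0 < s) :
    ∫⁻ σ in Set.Ioc 0 s, ENNReal.ofReal ((s-σ)^(a-1)) * ENNReal.ofReal (σ^(p-1))
      = ENNReal.ofReal (Real.Gamma a * Real.Gamma p / Real.Gamma (a+p) * s^(a+p-1)) := by
  have := kernel_lint ha hp hs
  simpa using this
set_option maxHeartbeats 1000000 in
lemma key_induction {c ρ z t : ℝ} (hc : 0 ≤ c) (hρ : 0 < ρ) (hρ1 : ρ < 1) (hz : 0 ≤ z)
    (ht : 0 < t) {y g : ℝ → ℝ} (hgm : Measurable g)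
    (hgy : ∀ᵐ σ ∂(volume.restrict (Set.Ioc 0 t)), g σ = y σ)
    (hbase : ∀ s : ℝ, 0 < s → s ≤ t →
      ENNReal.ofReal (y s) ≤ ENNReal.ofReal z + ENNReal.ofReal c * auxJ g ρ s) :
    ∀ n : ℕ, ∀ s : ℝ, 0 < s → s ≤ t →
      ENNReal.ofReal (y s) ≤ ENNReal.ofReal (z * auxS c ρ (n+1) s)
        + ENNReal.ofReal (auxC c ρ (n+1)) * auxJ g (((n:ℝ)+1)*ρ) s := by
  have hΓρ : (0:ℝ) < Real.Gamma ρ := Real.Gamma_pos_of_pos hρ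
  have hrpow : ∀ e : ℝ, Measurable (fun σ : ℝ => σ ^ e) := by
    intro e
    measurability
  have hker : ∀ s : ℝ, Measurable (fun σ : ℝ => ENNReal.ofReal ((s-σ)^(ρ-1))) := fun s =>
    ((hrpow (ρ-1)).comp (measurable_const.sub measurable_id)).ennreal_ofReal
  intro n
  induction n with
  | zero =>
    intro s hs hst
    have h1 : auxS c ρ 1 s = 1 := by
      simp [auxS, Real.Gamma_one]
    have h2 : auxC c ρ 1 = c := by
      simp only [auxC, pow_one, Nat.cast_one, one_mul]
      field_simp
    rw [h1, h2, mul_one]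
    simpa using hbase s hs hst
  | succ n ih =>
    intro s hs hst
    have hb' : (0:ℝ) < ((n:ℝ)+1)*ρ := by positivity
    have hΓ1 : (0:ℝ) < Real.Gamma (((n:ℝ)+1)*ρ) := Real.Gamma_pos_of_pos hb'
    have hΓ2 : (0:ℝ) < Real.Gamma (((n:ℝ)+2)*ρ) := Real.Gamma_pos_of_pos (by positivity)
    -- the J-monotonicity step
    have hJ : auxJ g ρ s ≤ ∫⁻ σ in Set.Ioc 0 s,
        ENNReal.ofReal ((s-σ)^(ρ-1)) * (ENNReal.ofReal (z * auxS c ρ (n+1) σ)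
          + ENNReal.ofReal (auxC c ρ (n+1)) * auxJ g (((n:ℝ)+1)*ρ) σ) := by
      apply lintegral_mono_ae
      have hsub : ∀ᵐ σ ∂(volume.restrict (Set.Ioc 0 s)), g σ = y σ :=
        ae_restrict_of_ae_restrict_of_subset (Set.Ioc_subset_Ioc_right hst) hgy
      filter_upwards [hsub, ae_restrict_mem measurableSet_Ioc] with σ hgσ hσ
      have hihσ := ih σ hσ.1 (hσ.2.trans hst)
      exact mul_le_mul_right (by rw [hgσ]; exact hihσ) _
    -- split into two terms
    set T1 : ℝ≥0∞ := ∫⁻ σ in Set.Ioc 0 s,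
        ENNReal.ofReal ((s-σ)^(ρ-1)) * ENNReal.ofReal (z * auxS c ρ (n+1) σ) with hT1def
    set T2 : ℝ≥0∞ := ∫⁻ σ in Set.Ioc 0 s,
        ENNReal.ofReal ((s-σ)^(ρ-1)) *
          (ENNReal.ofReal (auxC c ρ (n+1)) * auxJ g (((n:ℝ)+1)*ρ) σ) with hT2def
    have hsplit : (∫⁻ σ in Set.Ioc 0 s,
        ENNReal.ofReal ((s-σ)^(ρ-1)) * (ENNReal.ofReal (z * auxS c ρ (n+1) σ)
          + ENNReal.ofReal (auxC c ρ (n+1)) * auxJ g (((n:ℝ)+1)*ρ) σ)) = T1 + T2 := by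
      have hmS : Measurable (fun σ : ℝ =>
          ENNReal.ofReal ((s-σ)^(ρ-1)) * ENNReal.ofReal (z * auxS c ρ (n+1) σ)) := by
        apply (hker s).mul
        apply Measurable.ennreal_ofReal
        apply measurable_const.mul
        apply Finset.measurable_sum
        intro k _
        apply Measurable.div _ measurable_const
        exact (measurable_const.mul (hrpow ρ)).pow_const k
      rw [hT1def, hT2def, ← lintegral_add_left hmS]
      apply lintegral_congr
      intro σ
      rw [mul_add]
    -- compute T1
    have hT1 : T1 = ENNReal.ofReal (∑ k ∈ Finset.range (n+1),
        z * (c * Real.Gamma ρ) ^ k / Real.Gamma ((k:ℝ)*ρ+1) *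
          (Real.Gamma ρ * Real.Gamma ((k:ℝ)*ρ+1) / Real.Gamma (ρ+((k:ℝ)*ρ+1)) *
            s ^ (ρ+((k:ℝ)*ρ+1)-1))) := by
      have hpt : ∀ᵐ σ ∂(volume : Measure ℝ), σ ∈ Set.Ioc 0 s →
          ENNReal.ofReal ((s-σ)^(ρ-1)) * ENNReal.ofReal (z * auxS c ρ (n+1) σ)
            = ∑ k ∈ Finset.range (n+1),
              ENNReal.ofReal (z * (c * Real.Gamma ρ) ^ k / Real.Gamma ((k:ℝ)*ρ+1)) *
                (ENNReal.ofReal ((s-σ)^(ρ-1)) * ENNReal.ofReal (σ^(((k:ℝ)*ρ+1)-1))) := by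
        filter_upwards with σ hσ
        have hσ0 : (0:ℝ) < σ := hσ.1
        have hexp : ∀ k : ℕ, (c * Real.Gamma ρ * σ ^ ρ) ^ k
            = (c * Real.Gamma ρ) ^ k * σ ^ ((k:ℝ)*ρ) := by
          intro k
          rw [mul_pow, ← Real.rpow_natCast (σ ^ ρ) k, ← Real.rpow_mul hσ0.le, mul_comm ρ _]
        have hsum : z * auxS c ρ (n+1) σ = ∑ k ∈ Finset.range (n+1),
            z * (c * Real.Gamma ρ) ^ k / Real.Gamma ((k:ℝ)*ρ+1) * σ ^ ((k:ℝ)*ρ) := by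
          rw [auxS, Finset.mul_sum]
          apply Finset.sum_congr rfl
          intro k _
          rw [hexp k]; ring
        rw [hsum, ENNReal.ofReal_sum_of_nonneg (fun k _ => by positivity), Finset.mul_sum]
        apply Finset.sum_congr rfl
        intro k _
        rw [show ((k:ℝ)*ρ+1)-1 = (k:ℝ)*ρ by ring,
          ENNReal.ofReal_mul (by positivity : (0:ℝ) ≤ z * (c * Real.Gamma ρ) ^ k / Real.Gamma ((k:ℝ)*ρ+1))]
        ring
      rw [hT1def, setLIntegral_congr_fun_ae measurableSet_Ioc hpt,
        lintegral_finset_sum _ (fun k _ => (measurable_const.fun_mul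
          ((hker s).fun_mul (hrpow _).ennreal_ofReal))),
        ENNReal.ofReal_sum_of_nonneg (fun k _ => by positivity)]
      apply Finset.sum_congr rfl
      intro k _
      rw [lintegral_const_mul' _ _ ENNReal.ofReal_ne_top,
        power_lint hρ (by positivity : (0:ℝ) < (k:ℝ)*ρ+1) hs,
        ← ENNReal.ofReal_mul (by positivity)]
    -- compute T2
    have hT2 : T2 = ENNReal.ofReal (auxC c ρ (n+1)) *
        (ENNReal.ofReal (Real.Gamma ρ * Real.Gamma (((n:ℝ)+1)*ρ) / Real.Gamma (ρ+((n:ℝ)+1)*ρ)) *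
          auxJ g (ρ+((n:ℝ)+1)*ρ) s) := by
      have hrw : T2 = ∫⁻ σ in Set.Ioc 0 s, ENNReal.ofReal (auxC c ρ (n+1)) *
          (ENNReal.ofReal ((s-σ)^(ρ-1)) * auxJ g (((n:ℝ)+1)*ρ) σ) := by
        rw [hT2def]
        apply lintegral_congr
        intro σ
        ring
      rw [hrw, lintegral_const_mul' _ _ ENNReal.ofReal_ne_top]
      congr 1
      simpa only [auxJ] using swap_lemma g hgm hρ hb' hs
    -- assemble
    have hchain : ENNReal.ofReal (y s) ≤ ENNReal.ofReal z + ENNReal.ofReal c * (T1 + T2) := by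
      refine (hbase s hs hst).trans ?_
      exact add_le_add_right (mul_le_mul_right (hsplit ▸ hJ) _) _
    rw [mul_add, hT1, hT2] at hchain
    -- real arithmetic
    set A : ℝ := ∑ k ∈ Finset.range (n+1),
        z * (c * Real.Gamma ρ) ^ k / Real.Gamma ((k:ℝ)*ρ+1) *
          (Real.Gamma ρ * Real.Gamma ((k:ℝ)*ρ+1) / Real.Gamma (ρ+((k:ℝ)*ρ+1)) *
            s ^ (ρ+((k:ℝ)*ρ+1)-1)) with hAdef
    have hA0 : 0 ≤ A := by
      rw [hAdef]
      apply Finset.sum_nonneg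
      intro k _
      have := Real.Gamma_pos_of_pos (show (0:ℝ) < (k:ℝ)*ρ+1 by positivity)
      have := Real.Gamma_pos_of_pos (show (0:ℝ) < ρ+((k:ℝ)*ρ+1) by positivity)
      positivity
    have hterm : ∀ k ∈ Finset.range (n+1),
        c * (z * (c * Real.Gamma ρ) ^ k / Real.Gamma ((k:ℝ)*ρ+1) *
          (Real.Gamma ρ * Real.Gamma ((k:ℝ)*ρ+1) / Real.Gamma (ρ+((k:ℝ)*ρ+1)) *
            s ^ (ρ+((k:ℝ)*ρ+1)-1)))
        = z * ((c * Real.Gamma ρ * s ^ ρ) ^ (k+1) / Real.Gamma (((k+1:ℕ):ℝ)*ρ+1)) := by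
      intro k _
      have hΓk : (0:ℝ) < Real.Gamma ((k:ℝ)*ρ+1) := Real.Gamma_pos_of_pos (by positivity)
      have hΓk1 : (0:ℝ) < Real.Gamma (((k:ℝ)+1)*ρ+1) := Real.Gamma_pos_of_pos (by positivity)
      have hcast : ((k+1:ℕ):ℝ) = (k:ℝ)+1 := by push_cast; ring
      rw [hcast]
      have hpow : (c * Real.Gamma ρ * s ^ ρ) ^ (k+1)
          = (c * Real.Gamma ρ) ^ (k+1) * s ^ (((k:ℝ)+1)*ρ) := by
        rw [mul_pow, ← Real.rpow_natCast (s ^ ρ) (k+1), ← Real.rpow_mul hs.le]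
        push_cast
        rw [mul_comm ρ _]
      rw [hpow, show ρ+((k:ℝ)*ρ+1)-1 = ((k:ℝ)+1)*ρ by ring,
        show ρ+((k:ℝ)*ρ+1) = ((k:ℝ)+1)*ρ+1 by ring]
      field_simp
      ring
    have hreal1 : z + c * A = z * auxS c ρ (n+2) s := by
      have hzero : (c * Real.Gamma ρ * s ^ ρ) ^ (0:ℕ) / Real.Gamma (((0:ℕ):ℝ)*ρ+1) = 1 := by
        simp [Real.Gamma_one]
      calc z + c * A
          = z + ∑ k ∈ Finset.range (n+1),
              c * (z * (c * Real.Gamma ρ) ^ k / Real.Gamma ((k:ℝ)*ρ+1) *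
                (Real.Gamma ρ * Real.Gamma ((k:ℝ)*ρ+1) / Real.Gamma (ρ+((k:ℝ)*ρ+1)) *
                  s ^ (ρ+((k:ℝ)*ρ+1)-1))) := by rw [hAdef, Finset.mul_sum]
        _ = z + ∑ k ∈ Finset.range (n+1),
              z * ((c * Real.Gamma ρ * s ^ ρ) ^ (k+1) / Real.Gamma (((k+1:ℕ):ℝ)*ρ+1)) := by
            rw [Finset.sum_congr rfl hterm]
        _ = z * auxS c ρ (n+2) s := by
            rw [auxS, Finset.sum_range_succ' _ (n+1), mul_add, hzero, mul_one, Finset.mul_sum]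
            ring
    have hreal2 : c * auxC c ρ (n+1) * (Real.Gamma ρ * Real.Gamma (((n:ℝ)+1)*ρ) /
        Real.Gamma (ρ+((n:ℝ)+1)*ρ)) = auxC c ρ (n+2) := by
      simp only [auxC]
      have hc1 : ((n+1:ℕ):ℝ) = (n:ℝ)+1 := by push_cast; ring
      have hc2 : ((n+2:ℕ):ℝ) = (n:ℝ)+2 := by push_cast; ring
      rw [hc1, hc2, show ρ+((n:ℝ)+1)*ρ = ((n:ℝ)+2)*ρ by ring]
      field_simp
      ring
    -- final rewriting
    have hfin : ENNReal.ofReal z + (ENNReal.ofReal c * ENNReal.ofReal A +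
        ENNReal.ofReal c * (ENNReal.ofReal (auxC c ρ (n+1)) *
          (ENNReal.ofReal (Real.Gamma ρ * Real.Gamma (((n:ℝ)+1)*ρ) / Real.Gamma (ρ+((n:ℝ)+1)*ρ)) *
            auxJ g (ρ+((n:ℝ)+1)*ρ) s)))
        = ENNReal.ofReal (z * auxS c ρ (n+2) s)
          + ENNReal.ofReal (auxC c ρ (n+2)) * auxJ g (ρ+((n:ℝ)+1)*ρ) s := by
      rw [← ENNReal.ofReal_mul hc, ← add_assoc,
        ← ENNReal.ofReal_add hz (mul_nonneg hc hA0), hreal1]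
      congr 1
      have hC0 : (0:ℝ) ≤ auxC c ρ (n+1) := by
        rw [auxC]
        exact div_nonneg (mul_nonneg (pow_nonneg hc _) (pow_nonneg hΓρ.le _))
          (Real.Gamma_pos_of_pos (show (0:ℝ) < ((n+1:ℕ):ℝ)*ρ by positivity)).le
      rw [← mul_assoc, ← mul_assoc, ← ENNReal.ofReal_mul hc,
        ← ENNReal.ofReal_mul (mul_nonneg hc hC0), hreal2]
    rw [hfin] at hchain
    have hexpeq : ρ+((n:ℝ)+1)*ρ = (((n+1:ℕ):ℝ)+1)*ρ := by push_cast; ring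
    rw [hexpeq] at hchain
    exact hchain

/-- One-parameter Mittag-Leffler function E_{ρ,1} (real argument). -/
noncomputable def mittagLeffler1 (ρ z : ℝ) : ℝ :=
  ∑' k : ℕ, z ^ k / Real.Gamma (k * ρ + 1)

set_option maxHeartbeats 1000000 in
/-- Fractional Gronwall inequality (Henry's lemma) with constant forcing term. -/
theorem stmt_7 (c ρ z : ℝ) (b : EReal) (hc : 0 ≤ c) (hρ : 0 < ρ) (hρ1 : ρ < 1)
    (hz : 0 ≤ z) (hb : 0 < b) (y : ℝ → ℝ)
    (hy_nonneg : ∀ t : ℝ, 0 ≤ t → (t : EReal) < b → 0 ≤ y t)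
    (hy_int : ∀ t : ℝ, 0 ≤ t → (t : EReal) < b → IntervalIntegrable y volume 0 t)
    (hy : ∀ t : ℝ, 0 ≤ t → (t : EReal) < b →
      y t ≤ z + c * ∫ τ in (0:ℝ)..t, (t - τ) ^ (ρ - 1) * y τ) :
    ∀ t : ℝ, 0 ≤ t → (t : EReal) < b →
      y t ≤ z * mittagLeffler1 ρ (c * Real.Gamma ρ * t ^ ρ) := by
  have hΓρ : (0:ℝ) < Real.Gamma ρ := Real.Gamma_pos_of_pos hρ
  have hML0 : mittagLeffler1 ρ 0 = 1 := by
    rw [mittagLeffler1, tsum_eq_single 0 (fun k hk => by simp [zero_pow hk])]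
    simp [Real.Gamma_one]
  intro t ht htb
  rcases eq_or_lt_of_le ht with ht0 | ht0
  · -- t = 0
    subst ht0
    have h0 := hy 0 le_rfl htb
    rw [intervalIntegral.integral_same, mul_zero, add_zero] at h0
    rw [Real.zero_rpow hρ.ne', mul_zero, hML0, mul_one]
    exact h0
  · -- 0 < t
    have hlt : ∀ τ : ℝ, τ ≤ t → (τ : EReal) < b := fun τ h =>
      lt_of_le_of_lt (EReal.coe_le_coe_iff.2 h) htb
    have hInt : IntegrableOn y (Set.Ioc 0 t) volume := (hy_int t ht htb).1
    have hmeas : AEMeasurable y (volume.restrict (Set.Ioc 0 t)) :=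
      hInt.aestronglyMeasurable.aemeasurable
    set g : ℝ → ℝ := (Set.Ioc 0 t).indicator (fun σ => max (hmeas.mk y σ) 0) with hgdef
    have hgm : Measurable g :=
      (hmeas.measurable_mk.max measurable_const).indicator measurableSet_Ioc
    have hgy : ∀ᵐ σ ∂(volume.restrict (Set.Ioc 0 t)), g σ = y σ := by
      filter_upwards [hmeas.ae_eq_mk, ae_restrict_mem measurableSet_Ioc] with σ h1 h2
      rw [hgdef]
      simp only [Set.indicator_of_mem h2]
      rw [← h1]
      exact max_eq_left (hy_nonneg σ h2.1.le (hlt σ h2.2))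
    -- base inequality
    have hbase : ∀ s : ℝ, 0 < s → s ≤ t →
        ENNReal.ofReal (y s) ≤ ENNReal.ofReal z + ENNReal.ofReal c * auxJ g ρ s := by
      intro s hs hst
      have hys := hy s hs.le (hlt s hst)
      by_cases hI : IntervalIntegrable (fun τ => (s-τ)^(ρ-1) * y τ) volume 0 s
      · have hint0 : (0:ℝ) ≤ ∫ τ in (0:ℝ)..s, (s-τ)^(ρ-1) * y τ :=
          intervalIntegral.integral_nonneg hs.le (fun τ hτ =>
            mul_nonneg (Real.rpow_nonneg (by linarith [hτ.2]) _)
              (hy_nonneg τ hτ.1 (hlt τ (le_trans hτ.2 hst))))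
        have hIio : ∫ τ in (0:ℝ)..s, (s-τ)^(ρ-1) * y τ
            = ∫ τ in Set.Ioc 0 s, (s-τ)^(ρ-1) * y τ := intervalIntegral.integral_of_le hs.le
        have hOF : ENNReal.ofReal (∫ τ in Set.Ioc 0 s, (s-τ)^(ρ-1) * y τ)
            = ∫⁻ τ in Set.Ioc 0 s, ENNReal.ofReal ((s-τ)^(ρ-1) * y τ) := by
          apply ofReal_integral_eq_lintegral_ofReal hI.1
          filter_upwards [ae_restrict_mem measurableSet_Ioc] with τ hτ
          exact mul_nonneg (Real.rpow_nonneg (by linarith [hτ.2]) _)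
            (hy_nonneg τ hτ.1.le (hlt τ (le_trans hτ.2 hst)))
        have hcong : (∫⁻ τ in Set.Ioc 0 s, ENNReal.ofReal ((s-τ)^(ρ-1) * y τ)) = auxJ g ρ s := by
          rw [auxJ]
          apply lintegral_congr_ae
          have hsub : ∀ᵐ τ ∂(volume.restrict (Set.Ioc 0 s)), g τ = y τ :=
            ae_restrict_of_ae_restrict_of_subset (Set.Ioc_subset_Ioc_right hst) hgy
          filter_upwards [hsub, ae_restrict_mem measurableSet_Ioc] with τ h1 h2
          rw [ENNReal.ofReal_mul (Real.rpow_nonneg (by linarith [h2.2]) _), h1]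
        calc ENNReal.ofReal (y s)
            ≤ ENNReal.ofReal (z + c * ∫ τ in (0:ℝ)..s, (s-τ)^(ρ-1) * y τ) :=
              ENNReal.ofReal_le_ofReal hys
          _ = ENNReal.ofReal z + ENNReal.ofReal c * auxJ g ρ s := by
              rw [ENNReal.ofReal_add hz (mul_nonneg hc hint0), ENNReal.ofReal_mul hc,
                hIio, hOF, hcong]
      · rw [intervalIntegral.integral_undef hI, mul_zero, add_zero] at hys
        calc ENNReal.ofReal (y s) ≤ ENNReal.ofReal z := ENNReal.ofReal_le_ofReal hys
          _ ≤ ENNReal.ofReal z + ENNReal.ofReal c * auxJ g ρ s := le_add_right le_rfl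
    have key := key_induction hc hρ hρ1 hz ht0 hgm hgy hbase
    -- the total mass M
    set M : ℝ := ∫ τ in (0:ℝ)..t, y τ with hMdef
    have hM0 : 0 ≤ M := intervalIntegral.integral_nonneg ht
      (fun τ hτ => hy_nonneg τ hτ.1 (hlt τ hτ.2))
    have hMlint : (∫⁻ σ in Set.Ioc 0 t, ENNReal.ofReal (g σ)) = ENNReal.ofReal M := by
      have h1 : (∫⁻ σ in Set.Ioc 0 t, ENNReal.ofReal (g σ))
          = ∫⁻ σ in Set.Ioc 0 t, ENNReal.ofReal (y σ) := by
        apply lintegral_congr_ae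
        filter_upwards [hgy] with σ h
        rw [h]
      rw [h1, ← ofReal_integral_eq_lintegral_ofReal hInt ?_, hMdef,
        intervalIntegral.integral_of_le ht]
      filter_upwards [ae_restrict_mem measurableSet_Ioc] with τ hτ
      exact hy_nonneg τ hτ.1.le (hlt τ hτ.2)
    -- eventual real bound
    have hbound : ∀ n : ℕ, 1 ≤ ((n:ℝ)+1)*ρ →
        y t ≤ z * auxS c ρ (n+1) t + auxC c ρ (n+1) * ((1+t)^(((n:ℝ)+1)*ρ) * M) := by
      intro n hn
      have hkey := key n t ht0 le_rfl
      have hJb : auxJ g (((n:ℝ)+1)*ρ) t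
          ≤ ENNReal.ofReal ((1+t)^(((n:ℝ)+1)*ρ)) * ENNReal.ofReal M := by
        rw [← hMlint, ← lintegral_const_mul' _ _ ENNReal.ofReal_ne_top, auxJ]
        apply lintegral_mono_ae
        filter_upwards [ae_restrict_mem measurableSet_Ioc] with σ hσ
        apply mul_le_mul_left
        apply ENNReal.ofReal_le_ofReal
        calc (t-σ)^(((n:ℝ)+1)*ρ-1) ≤ (1+t)^(((n:ℝ)+1)*ρ-1) :=
            Real.rpow_le_rpow (by linarith [hσ.2]) (by linarith [hσ.1]) (by linarith)
          _ ≤ (1+t)^(((n:ℝ)+1)*ρ) :=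
            Real.rpow_le_rpow_of_exponent_le (by linarith) (by linarith)
      have hS0 : (0:ℝ) ≤ auxS c ρ (n+1) t := by
        rw [auxS]
        apply Finset.sum_nonneg
        intro k _
        exact div_nonneg (pow_nonneg (by positivity) _)
          (Real.Gamma_pos_of_pos (by positivity)).le
      have hC0 : (0:ℝ) ≤ auxC c ρ (n+1) := by
        rw [auxC]
        exact div_nonneg (mul_nonneg (pow_nonneg hc _) (pow_nonneg hΓρ.le _))
          (Real.Gamma_pos_of_pos (show (0:ℝ) < ((n+1:ℕ):ℝ)*ρ by positivity)).le
      have h2 : ENNReal.ofReal (y t)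
          ≤ ENNReal.ofReal (z * auxS c ρ (n+1) t
              + auxC c ρ (n+1) * ((1+t)^(((n:ℝ)+1)*ρ) * M)) := by
        refine hkey.trans ?_
        rw [ENNReal.ofReal_add (mul_nonneg hz hS0)
            (mul_nonneg hC0 (mul_nonneg (Real.rpow_nonneg (by linarith) _) hM0))]
        apply add_le_add_right
        rw [ENNReal.ofReal_mul hC0, ENNReal.ofReal_mul (Real.rpow_nonneg (by linarith) _)]
        exact mul_le_mul_right hJb _
      have hRHS0 : (0:ℝ) ≤ z * auxS c ρ (n+1) t
          + auxC c ρ (n+1) * ((1+t)^(((n:ℝ)+1)*ρ) * M) := by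
        have : (0:ℝ) ≤ (1+t)^(((n:ℝ)+1)*ρ) := Real.rpow_nonneg (by linarith) _
        positivity
      exact (ENNReal.ofReal_le_ofReal_iff hRHS0).1 h2
    -- limits
    set x : ℝ := c * Real.Gamma ρ * t ^ ρ with hxdef
    have hx0 : (0:ℝ) ≤ x := by
      rw [hxdef]
      have : (0:ℝ) ≤ t ^ ρ := Real.rpow_nonneg ht _
      positivity
    have hsum : Summable (fun k : ℕ => x ^ k / Real.Gamma ((k:ℝ)*ρ+1)) :=
      summable_aux hx0 hρ hρ1 one_pos
    have hS_t : Filter.Tendsto (fun n : ℕ => z * auxS c ρ (n+1) t) Filter.atTop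
        (nhds (z * mittagLeffler1 ρ x)) := by
      have h1 : Filter.Tendsto (fun n : ℕ => auxS c ρ n t) Filter.atTop
          (nhds (mittagLeffler1 ρ x)) := by
        rw [mittagLeffler1]
        exact hsum.hasSum.tendsto_sum_nat.congr fun n => by rw [auxS]
      exact tendsto_const_nhds.mul (h1.comp (Filter.tendsto_add_atTop_nat 1))
    set q : ℝ := c * Real.Gamma ρ * (1+t) ^ ρ with hqdef
    have hq0 : (0:ℝ) ≤ q := by
      rw [hqdef]
      have : (0:ℝ) ≤ (1+t) ^ ρ := Real.rpow_nonneg (by linarith) _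
      positivity
    have hsum2 : Summable (fun k : ℕ => q ^ k / Real.Gamma ((k:ℝ)*ρ+ρ)) :=
      summable_aux hq0 hρ hρ1 hρ
    have hterm0 : Filter.Tendsto (fun k : ℕ => q ^ k / Real.Gamma ((k:ℝ)*ρ+ρ))
        Filter.atTop (nhds 0) := hsum2.tendsto_atTop_zero
    have hR : Filter.Tendsto
        (fun n : ℕ => auxC c ρ (n+1) * ((1+t)^(((n:ℝ)+1)*ρ) * M)) Filter.atTop (nhds 0) := by
      have heq : ∀ n : ℕ, auxC c ρ (n+1) * ((1+t)^(((n:ℝ)+1)*ρ) * M)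
          = q * (q ^ n / Real.Gamma ((n:ℝ)*ρ+ρ)) * M := by
        intro n
        rw [auxC, show ((n+1:ℕ):ℝ) = (n:ℝ)+1 by push_cast; ring]
        have hpow : (1+t)^(((n:ℝ)+1)*ρ) = ((1+t)^ρ)^(n+1) := by
          rw [← Real.rpow_natCast ((1+t)^ρ) (n+1), ← Real.rpow_mul (by linarith : (0:ℝ) ≤ 1+t)]
          push_cast
          ring_nf
        rw [hpow, hqdef, show ((n:ℝ)+1)*ρ = (n:ℝ)*ρ+ρ by ring]
        have hΓ : (0:ℝ) < Real.Gamma ((n:ℝ)*ρ+ρ) := Real.Gamma_pos_of_pos (by positivity)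
        rw [mul_pow, mul_pow, pow_succ, pow_succ, pow_succ]
        field_simp
      have h2 : Filter.Tendsto (fun n : ℕ => q * (q ^ n / Real.Gamma ((n:ℝ)*ρ+ρ)) * M)
          Filter.atTop (nhds (q * 0 * M)) :=
        (tendsto_const_nhds.mul hterm0).mul tendsto_const_nhds
      rw [show q * 0 * M = 0 by ring] at h2
      exact h2.congr fun n => (heq n).symm
    have htot : Filter.Tendsto
        (fun n : ℕ => z * auxS c ρ (n+1) t + auxC c ρ (n+1) * ((1+t)^(((n:ℝ)+1)*ρ) * M))
        Filter.atTop (nhds (z * mittagLeffler1 ρ x)) := by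
      have := hS_t.add hR
      simpa using this
    have hev : ∀ᶠ n : ℕ in Filter.atTop,
        y t ≤ z * auxS c ρ (n+1) t + auxC c ρ (n+1) * ((1+t)^(((n:ℝ)+1)*ρ) * M) := by
      have h1 : Filter.Tendsto (fun n : ℕ => ((n:ℝ)+1)*ρ) Filter.atTop Filter.atTop :=
        (Filter.tendsto_atTop_add_const_right _ 1 tendsto_natCast_atTop_atTop).atTop_mul_const hρ
      filter_upwards [h1.eventually_ge_atTop 1] with n hn using hbound n hn
    exact ge_of_tendsto htot hev
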